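/- Let T be a bounded operator on a Hilbert space, let E be a projection, and suppose T₁ = TE and T₂ = TE^⊥ satisfy Tⱼ*Tⱼ ≥ aⱼ² on ran E and ran E^⊥ respectively (a₁, a₂ > 0). Let λ = ‖P₁P₂‖ where Pⱼ is the range projection of Tⱼ. Then T*T ≥ (1 − λ) min(a₁², a₂²) I. -/

import Mathlib

variable {H : Type*} [NormedAddCommGroup H] [InnerProductSpace ℂ H] [CompleteSpace H]

/-- The orthogonal projection onto the closure of the range of a bounded operator. -/
noncomputable def rangeProj (T : H →L[ℂ] H) : H →L[ℂ] H :=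
  (LinearMap.range (T : H →ₗ[ℂ] H)).topologicalClosure.subtypeL ∘L
    (LinearMap.range (T : H →ₗ[ℂ] H)).topologicalClosure.orthogonalProjectionOnto

lemma rangeProj_isSelfAdjoint (T : H →L[ℂ] H) : IsSelfAdjoint (rangeProj T) :=
  isSelfAdjoint_starProjection (LinearMap.range (T : H →ₗ[ℂ] H)).topologicalClosure

lemma rangeProj_apply_mem (T : H →L[ℂ] H) (x : H) : rangeProj T (T x) = T x := by
  have hmem : T x ∈ (LinearMap.range (T : H →ₗ[ℂ] H)).topologicalClosure :=
    Submodule.le_topologicalClosure _ (LinearMap.mem_range_self (T : H →ₗ[ℂ] H) x)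
  exact Submodule.starProjection_eq_self_iff.mpr hmem

lemma sa_inner (E : H →L[ℂ] H) (hEsa : IsSelfAdjoint E) (x y : H) :
    (inner ℂ (E x) y : ℂ) = inner ℂ x (E y) := by
  rw [← ContinuousLinearMap.adjoint_inner_left, ← ContinuousLinearMap.star_eq_adjoint, hEsa]

set_option maxHeartbeats 1600000 in
/-- If `E T* T E ≥ a₁² E` and `E^⊥ T* T E^⊥ ≥ a₂² E^⊥`, and `λ = ‖P₁ P₂‖` where `P₁`,
`P₂` are the range projections of `T E` and `T E^⊥`, then
`T* T ≥ (1 - λ) min(a₁², a₂²) • 1`. -/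
theorem stmt9 (T E : H →L[ℂ] H)
    (hEsa : IsSelfAdjoint E) (hEidem : IsIdempotentElem E)
    (a₁ a₂ : ℝ) (ha₁ : 0 < a₁) (ha₂ : 0 < a₂)
    (h1 : a₁ ^ 2 • E ≤ E * (star T * T) * E)
    (h2 : a₂ ^ 2 • (1 - E) ≤ (1 - E) * (star T * T) * (1 - E)) :
    ((1 - ‖rangeProj (T * E) * rangeProj (T * (1 - E))‖) * min (a₁ ^ 2) (a₂ ^ 2)) •
        (1 : H →L[ℂ] H) ≤ star T * T := by
  set F : H →L[ℂ] H := 1 - E with hF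
  have hFsa : IsSelfAdjoint F := (IsSelfAdjoint.one (H →L[ℂ] H)).sub hEsa
  have hFidem : IsIdempotentElem F := hEidem.one_sub
  set lam : ℝ := ‖rangeProj (T * E) * rangeProj (T * F)‖ with hlam
  set c : ℝ := (1 - lam) * min (a₁ ^ 2) (a₂ ^ 2) with hc
  rw [ContinuousLinearMap.le_def]
  constructor
  · have h1sa : IsSelfAdjoint (star T * T) := by
      rw [IsSelfAdjoint]; simp [mul_comm]
    have h2sa : IsSelfAdjoint (c • (1 : H →L[ℂ] H)) := by
      rw [IsSelfAdjoint, star_smul]; simp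
    exact ContinuousLinearMap.isSelfAdjoint_iff_isSymmetric.mp (h1sa.sub h2sa)
  · intro x
    have hEE : E (E x) = E x := by rw [← ContinuousLinearMap.mul_apply, hEidem.eq]
    have hFF : F (F x) = F x := by rw [← ContinuousLinearMap.mul_apply, hFidem.eq]
    have hEF : E x + F x = x := by simp [hF]
    have hEFx : E (F x) = 0 :=
      calc E (F x) = E x - E (E x) := by simp [hF, map_sub]
        _ = 0 := by rw [hEE, sub_self]
    have horth : (inner ℂ (E x) (F x) : ℂ) = 0 := by
      rw [sa_inner E hEsa, hEFx, inner_zero_right]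
    have hpyth : ‖E x‖ ^ 2 + ‖F x‖ ^ 2 = ‖x‖ ^ 2 := by
      have := norm_add_sq_eq_norm_sq_add_norm_sq_of_inner_eq_zero (E x) (F x) horth
      rw [hEF] at this
      linarith
    have hinE : (inner ℂ (E x) x : ℂ) = inner ℂ (E x) (E x) := by
      nth_rw 1 [← hEE]; rw [sa_inner E hEsa]
    have hinF : (inner ℂ (F x) x : ℂ) = inner ℂ (F x) (F x) := by
      nth_rw 1 [← hFF]; rw [sa_inner F hFsa]
    -- lower bounds on ‖T (E x)‖ and ‖T (F x)‖
    have key1 : a₁ ^ 2 * ‖E x‖ ^ 2 ≤ ‖T (E x)‖ ^ 2 := by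
      have hp := (ContinuousLinearMap.le_def _ _ |>.mp h1).2 x
      rw [ContinuousLinearMap.reApplyInnerSelf_apply, ContinuousLinearMap.sub_apply,
        inner_sub_left, map_sub] at hp
      have e1 : (inner ℂ ((E * (star T * T) * E) x) x : ℂ) = inner ℂ (T (E x)) (T (E x)) := by
        simp only [ContinuousLinearMap.mul_apply]
        rw [sa_inner E hEsa, ContinuousLinearMap.star_eq_adjoint,
          ContinuousLinearMap.adjoint_inner_left]
      have e2 : RCLike.re (inner ℂ ((a₁ ^ 2 • E) x) x : ℂ) = a₁ ^ 2 * ‖E x‖ ^ 2 := by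
        rw [ContinuousLinearMap.smul_apply, RCLike.real_smul_eq_coe_smul (K := ℂ),
          inner_smul_real_left, RCLike.smul_re, hinE, inner_self_eq_norm_sq (𝕜 := ℂ)]
      rw [e1] at hp
      have hp' : 0 ≤ ‖T (E x)‖ ^ 2 - a₁ ^ 2 * ‖E x‖ ^ 2 := by
        rw [← e2, ← inner_self_eq_norm_sq (𝕜 := ℂ) (T (E x))]
        exact hp
      linarith
    have key2 : a₂ ^ 2 * ‖F x‖ ^ 2 ≤ ‖T (F x)‖ ^ 2 := by
      have hp := (ContinuousLinearMap.le_def _ _ |>.mp h2).2 x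
      rw [ContinuousLinearMap.reApplyInnerSelf_apply, ContinuousLinearMap.sub_apply,
        inner_sub_left, map_sub] at hp
      have e1 : (inner ℂ (((1 - E) * (star T * T) * (1 - E)) x) x : ℂ)
          = inner ℂ (T (F x)) (T (F x)) := by
        rw [show ((1 : H →L[ℂ] H) - E) = F from rfl]
        simp only [ContinuousLinearMap.mul_apply]
        rw [sa_inner F hFsa, ContinuousLinearMap.star_eq_adjoint,
          ContinuousLinearMap.adjoint_inner_left]
      have e2 : RCLike.re (inner ℂ ((a₂ ^ 2 • (1 - E)) x) x : ℂ) = a₂ ^ 2 * ‖F x‖ ^ 2 := by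
        rw [show ((1 : H →L[ℂ] H) - E) = F from rfl]
        rw [ContinuousLinearMap.smul_apply, RCLike.real_smul_eq_coe_smul (K := ℂ),
          inner_smul_real_left, RCLike.smul_re, hinF, inner_self_eq_norm_sq (𝕜 := ℂ)]
      rw [e1] at hp
      have hp' : 0 ≤ ‖T (F x)‖ ^ 2 - a₂ ^ 2 * ‖F x‖ ^ 2 := by
        rw [← e2, ← inner_self_eq_norm_sq (𝕜 := ℂ) (T (F x))]
        exact hp
      linarith
    -- cross term bound
    have hcross : |RCLike.re (inner ℂ (T (E x)) (T (F x)) : ℂ)|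
        ≤ lam * (‖T (E x)‖ * ‖T (F x)‖) := by
      have e : (inner ℂ (T (E x)) ((rangeProj (T * E) * rangeProj (T * F)) (T (F x))) : ℂ)
          = inner ℂ (T (E x)) (T (F x)) := by
        have h1' : rangeProj (T * F) (T (F x)) = T (F x) := by
          have := rangeProj_apply_mem (T * F) x
          simpa [ContinuousLinearMap.mul_apply] using this
        have h2' : rangeProj (T * E) (T (E x)) = T (E x) := by
          have := rangeProj_apply_mem (T * E) x
          simpa [ContinuousLinearMap.mul_apply] using this
        rw [ContinuousLinearMap.mul_apply, h1',
          ← sa_inner _ (rangeProj_isSelfAdjoint (T * E)), h2']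
      calc |RCLike.re (inner ℂ (T (E x)) (T (F x)) : ℂ)|
          ≤ ‖(inner ℂ (T (E x)) (T (F x)) : ℂ)‖ := RCLike.abs_re_le_norm _
        _ = ‖(inner ℂ (T (E x)) ((rangeProj (T * E) * rangeProj (T * F)) (T (F x))) : ℂ)‖ := by
            rw [e]
        _ ≤ ‖T (E x)‖ * ‖(rangeProj (T * E) * rangeProj (T * F)) (T (F x))‖ :=
            norm_inner_le_norm _ _
        _ ≤ ‖T (E x)‖ * (lam * ‖T (F x)‖) := by
            gcongr
            exact (rangeProj (T * E) * rangeProj (T * F)).le_opNorm _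
        _ = lam * (‖T (E x)‖ * ‖T (F x)‖) := by ring
    -- expand ‖T x‖ ^ 2
    have hTx : T x = T (E x) + T (F x) := by rw [← map_add, hEF]
    have hexp : ‖T x‖ ^ 2 = ‖T (E x)‖ ^ 2 + 2 * RCLike.re (inner ℂ (T (E x)) (T (F x)) : ℂ)
        + ‖T (F x)‖ ^ 2 := by
      rw [hTx]
      exact norm_add_sq (𝕜 := ℂ) _ _
    -- compute the goal quantity
    rw [ContinuousLinearMap.reApplyInnerSelf_apply, ContinuousLinearMap.sub_apply,
      inner_sub_left, map_sub]
    have g1 : (inner ℂ ((star T * T) x) x : ℂ) = inner ℂ (T x) (T x) := by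
      rw [ContinuousLinearMap.mul_apply, ContinuousLinearMap.star_eq_adjoint,
        ContinuousLinearMap.adjoint_inner_left]
    have g2 : RCLike.re (inner ℂ ((c • (1 : H →L[ℂ] H)) x) x : ℂ) = c * ‖x‖ ^ 2 := by
      rw [ContinuousLinearMap.smul_apply, ContinuousLinearMap.one_apply,
        RCLike.real_smul_eq_coe_smul (K := ℂ), inner_smul_real_left, RCLike.smul_re,
        inner_self_eq_norm_sq (𝕜 := ℂ)]
    have goal' : 0 ≤ ‖T x‖ ^ 2 - c * ‖x‖ ^ 2 → 0 ≤ RCLike.re (inner ℂ ((star T * T) x) x : ℂ)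
        - RCLike.re (inner ℂ ((c • (1 : H →L[ℂ] H)) x) x : ℂ) := by
      intro h
      rw [g1, g2, inner_self_eq_norm_sq (𝕜 := ℂ)]
      simpa using h
    refine goal' ?_
    have hlam0 : 0 ≤ lam := norm_nonneg _
    clear_value F lam c
    have hmin1 : min (a₁ ^ 2) (a₂ ^ 2) ≤ a₁ ^ 2 := min_le_left _ _
    have hmin2 : min (a₁ ^ 2) (a₂ ^ 2) ≤ a₂ ^ 2 := min_le_right _ _
    have hmin0 : 0 ≤ min (a₁ ^ 2) (a₂ ^ 2) := le_min (by positivity) (by positivity)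
    rcases le_or_gt lam 1 with hl | hl
    · have hcr : -(lam * (‖T (E x)‖ * ‖T (F x)‖))
          ≤ RCLike.re (inner ℂ (T (E x)) (T (F x)) : ℂ) := neg_le_of_abs_le hcross
      have hE2 : min (a₁ ^ 2) (a₂ ^ 2) * ‖E x‖ ^ 2 ≤ ‖T (E x)‖ ^ 2 :=
        le_trans (mul_le_mul_of_nonneg_right hmin1 (sq_nonneg _)) key1
      have hF2 : min (a₁ ^ 2) (a₂ ^ 2) * ‖F x‖ ^ 2 ≤ ‖T (F x)‖ ^ 2 :=
        le_trans (mul_le_mul_of_nonneg_right hmin2 (sq_nonneg _)) key2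
      have hsum : min (a₁ ^ 2) (a₂ ^ 2) * ‖x‖ ^ 2 ≤ ‖T (E x)‖ ^ 2 + ‖T (F x)‖ ^ 2 := by
        rw [← hpyth, mul_add]
        exact add_le_add hE2 hF2
      have hq1 : 0 ≤ lam * (‖T (E x)‖ - ‖T (F x)‖) ^ 2 := mul_nonneg hlam0 (sq_nonneg _)
      have hq2 : 0 ≤ (1 - lam) * (‖T (E x)‖ ^ 2 + ‖T (F x)‖ ^ 2
          - min (a₁ ^ 2) (a₂ ^ 2) * ‖x‖ ^ 2) := mul_nonneg (by linarith) (by linarith)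
      rw [hc]
      nlinarith [hexp, hcr, hq1, hq2]
    · have hc0 : c ≤ 0 := by
        rw [hc]
        exact mul_nonpos_of_nonpos_of_nonneg (by linarith) hmin0
      have := mul_nonpos_of_nonpos_of_nonneg hc0 (sq_nonneg ‖x‖)
      nlinarith [sq_nonneg ‖T x‖]
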